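/- The endomorphism W has three pairwise distinct eigenvalues if and only if σ·(9Ω² - 4σ) ≠ 0. (The algebraic content of case (v) of Theorem 4 of the paper: a space-time admitting a 2+2 umbilical structure is of Petrov–Bel type I exactly when (𝒵,𝒵)·(9Ω² - 4(𝒵,𝒵)) ≠ 0.) -/
import Mathlib


open Module LinearMap

noncomputable section

/-- The endomorphism `W(x) := 3Ω·B(u,x)·u + Ω·x + B(u,x)·z + B(z,x)·u` of `V`,
representing the self-dual Weyl tensor `𝒲 = 3Ω·𝒰⊗𝒰 + Ω·𝒢 + 𝒰⊗̃𝒵` of a space-time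
admitting a 2+2 umbilical structure acting on self-dual bivectors. -/
def Wmap {V : Type*} [AddCommGroup V] [Module ℂ V]
    (B : LinearMap.BilinForm ℂ V) (Ω : ℂ) (u z : V) : V →ₗ[ℂ] V :=
  (3 * Ω) • (B u).smulRight u + Ω • LinearMap.id + (B u).smulRight z + (B z).smulRight u

end

section aux
variable {V : Type*} [AddCommGroup V] [Module ℂ V]
  {B : LinearMap.BilinForm ℂ V} {Ω : ℂ} {u z : V}

lemma Wmap_apply (B : LinearMap.BilinForm ℂ V) (Ω : ℂ) (u z : V) (x : V) :
    Wmap B Ω u z x = Ω • x + ((3*Ω) * B u x + B z x) • u + B u x • z := by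
  simp [Wmap, add_smul, smul_smul]
  module

/-- every eigenvalue is a root of the characteristic cubic -/
lemma eig_root (hu : B u u = -1) (huz : B u z = 0) (hBsym : ∀ x y, B x y = B y x)
    {lam : ℂ} (h : Module.End.HasEigenvalue (Wmap B Ω u z) lam) :
    (lam - Ω) * (lam ^ 2 + Ω * lam + B z z - 2 * Ω ^ 2) = 0 := by
  obtain ⟨x, hx, hx0⟩ := h.exists_hasEigenvector
  have hWx : Wmap B Ω u z x = lam • x := Module.End.mem_eigenspace_iff.mp hx
  have hzu : B z u = 0 := (hBsym z u).trans huz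
  have hf : lam * B u x + 2*Ω * B u x + B z x = 0 := by
    have h1 := congrArg (B u) hWx
    simp only [Wmap_apply, map_add, map_smul, hu, huz, smul_eq_mul] at h1
    linear_combination -h1
  have hg : lam * B z x - Ω * B z x - B z z * B u x = 0 := by
    have h1 := congrArg (B z) hWx
    simp only [Wmap_apply, map_add, map_smul, hzu, smul_eq_mul] at h1
    linear_combination -h1
  by_cases hf0 : B u x = 0
  · have hg0 : B z x = 0 := by linear_combination hf - lam * hf0 - 2*Ω*hf0
    have : (lam - Ω) • x = 0 := by
      have := hWx
      rw [Wmap_apply, hf0, hg0] at this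
      simp at this
      rw [sub_smul]
      simp [this]
    rcases smul_eq_zero.mp this with h | h
    · rw [sub_eq_zero.mp h]; ring
    · exact absurd h hx0
  · have h4 : (lam ^ 2 + Ω * lam + B z z - 2 * Ω ^ 2) * B u x = 0 := by
      linear_combination (lam - Ω) * hf - hg
    rcases mul_eq_zero.mp h4 with h | h
    · rw [h]; ring
    · exact absurd h hf0

/-- roots of the quadratic give eigenvalues when σ ≠ 0 -/
lemma quad_eig (hu : B u u = -1) (huz : B u z = 0) (hBsym : ∀ x y, B x y = B y x)
    (hσ : B z z ≠ 0) {lam : ℂ} (hq : lam ^ 2 + Ω * lam + B z z - 2 * Ω ^ 2 = 0) :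
    Module.End.HasEigenvalue (Wmap B Ω u z) lam := by
  have hzu : B z u = 0 := (hBsym z u).trans huz
  set v : V := (Ω - lam) • u + z with hv
  have hBuv : B u v = lam - Ω := by simp [hv, hu, huz]
  have hBzv : B z v = B z z := by simp [hv, hzu]
  have hv0 : v ≠ 0 := by
    intro h0
    have hbv : B u v = 0 := by rw [h0]; exact map_zero _
    rw [hBuv, sub_eq_zero] at hbv
    subst hbv
    apply hσ
    linear_combination hq
  have hW : Wmap B Ω u z v = lam • v := by
    rw [Wmap_apply, hBuv, hBzv, hv]
    match_scalars
    · linear_combination hq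
    · ring
  exact Module.End.hasEigenvalue_of_hasEigenvector
    ⟨Module.End.mem_eigenspace_iff.mpr hW, hv0⟩

/-- Ω is always an eigenvalue (in dimension 3) -/
lemma omega_eig [FiniteDimensional ℂ V] (hdim : Module.finrank ℂ V = 3) :
    Module.End.HasEigenvalue (Wmap B Ω u z) Ω := by
  set φ : V →ₗ[ℂ] ℂ × ℂ := (B u).prod (B z) with hφ
  have hker : LinearMap.ker φ ≠ ⊥ := by
    intro h
    have hinj : Function.Injective φ := LinearMap.ker_eq_bot.mp h
    have := LinearMap.finrank_le_finrank_of_injective hinj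
    rw [hdim] at this
    simp at this
  obtain ⟨x, hxker, hx0⟩ := Submodule.ne_bot_iff _ |>.mp hker
  have hx : φ x = 0 := LinearMap.mem_ker.mp hxker
  have h1 : B u x = 0 := congrArg Prod.fst hx
  have h2 : B z x = 0 := congrArg Prod.snd hx
  have hW : Wmap B Ω u z x = Ω • x := by
    rw [Wmap_apply, h1, h2]; simp
  exact Module.End.hasEigenvalue_of_hasEigenvector
    ⟨Module.End.mem_eigenspace_iff.mpr hW, hx0⟩

end aux

/-- Theorem 4, case (v), type I: `W` has three pairwise distinct
eigenvalues if and only if `σ·(9Ω² - 4σ) ≠ 0`, where `σ := B(z,z)`. -/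
theorem typeI_characterization
    {V : Type*} [AddCommGroup V] [Module ℂ V] [FiniteDimensional ℂ V]
    (hdim : finrank ℂ V = 3)
    (B : LinearMap.BilinForm ℂ V) (hBsym : ∀ x y, B x y = B y x)
    (hBnd : B.Nondegenerate)
    (Ω : ℂ) (u z : V) (hu : B u u = -1) (huz : B u z = 0) :
    (∃ a b c : ℂ, a ≠ b ∧ a ≠ c ∧ b ≠ c ∧
        Module.End.HasEigenvalue (Wmap B Ω u z) a ∧
        Module.End.HasEigenvalue (Wmap B Ω u z) b ∧
        Module.End.HasEigenvalue (Wmap B Ω u z) c)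
      ↔ B z z * (9 * Ω ^ 2 - 4 * B z z) ≠ 0 := by
  constructor
  · rintro ⟨a, b, c, hab, hac, hbc, ha, hb, hc⟩ hσ0
    rcases mul_eq_zero.mp hσ0 with h0 | h0
    · have key : ∀ lam : ℂ, Module.End.HasEigenvalue (Wmap B Ω u z) lam →
          lam = Ω ∨ lam = -2*Ω := by
        intro lam hl
        have hr := eig_root hu huz hBsym hl
        have h3 : (lam - Ω)^2 * (lam + 2*Ω) = 0 := by
          linear_combination hr - (lam - Ω) * h0
        rcases mul_eq_zero.mp h3 with h | h
        · left
          have := sq_eq_zero_iff.mp h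
          exact sub_eq_zero.mp this
        · right; linear_combination h
      rcases key a ha with h | h <;> rcases key b hb with h' | h' <;>
        rcases key c hc with h'' | h'' <;> simp_all
    · have key : ∀ lam : ℂ, Module.End.HasEigenvalue (Wmap B Ω u z) lam →
          lam = Ω ∨ lam = -Ω/2 := by
        intro lam hl
        have hr := eig_root hu huz hBsym hl
        have h3 : (lam - Ω) * (2*lam + Ω)^2 = 0 := by
          linear_combination 4 * hr + (lam - Ω) * h0
        rcases mul_eq_zero.mp h3 with h | h
        · left; exact sub_eq_zero.mp h
        · right
          have := sq_eq_zero_iff.mp h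
          linear_combination this / 2
      rcases key a ha with h | h <;> rcases key b hb with h' | h' <;>
        rcases key c hc with h'' | h'' <;> simp_all
  · intro hσ
    have hσ1 : B z z ≠ 0 := fun h => hσ (by rw [h]; ring)
    have hσ2 : 9 * Ω ^ 2 - 4 * B z z ≠ 0 := fun h => hσ (by rw [h]; ring)
    obtain ⟨s, hs⟩ := IsAlgClosed.exists_pow_nat_eq (9 * Ω ^ 2 - 4 * B z z) zero_lt_two
    have hs0 : s ≠ 0 := fun h => hσ2 (by rw [← hs, h]; ring)
    have hqa : ((-Ω+s)/2) ^ 2 + Ω * ((-Ω+s)/2) + B z z - 2 * Ω ^ 2 = 0 := by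
      linear_combination hs / 4
    have hqb : ((-Ω-s)/2) ^ 2 + Ω * ((-Ω-s)/2) + B z z - 2 * Ω ^ 2 = 0 := by
      linear_combination hs / 4
    have key : ∀ t : ℂ, t ^ 2 + Ω * t + B z z - 2 * Ω ^ 2 = 0 → t ≠ Ω := by
      intro t ht h
      subst h
      exact hσ1 (by linear_combination ht)
    refine ⟨(-Ω+s)/2, (-Ω-s)/2, Ω, ?_, key _ hqa, key _ hqb, ?_, ?_, ?_⟩
    · intro h; exact hs0 (by linear_combination h)
    · exact quad_eig hu huz hBsym hσ1 hqa
    · exact quad_eig hu huz hBsym hσ1 hqb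
    · exact omega_eig hdim
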